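/- arXiv:2409.09064 — 8 statements merged into one kernel-verified Lean document; each statement's English description precedes it below -/
import Mathlib

section
/- Let p : ℕ⁺ → ℝ with p_n ≥ 0 and ∑_{n=1}^∞ p_n = 1, and suppose a : ℕ⁺ → ℝ is a strategy, i.e. a_n ≥ 0, ∑_{n=1}^∞ a_n = 1, and for every finite-cycle-permutation σ the set {n : a_n ≥ ∑_{m ∈ orbit_σ(n)} p_m} is infinite. Then for every permutation δ of the positive integers with a_{δ(n+1)} ≤ a_{δ(n)} for all n, one has ∑_{n=1}^∞ n·p_{δ(n)} < ∞. -/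
set_option maxHeartbeats 1000000


open scoped BigOperators ENNReal

/-- A permutation of the positive integers all of whose cycles (orbits) are finite. -/
def FiniteCycles (s : Equiv.Perm ℕ+) : Prop :=
  ∀ n : ℕ+, {m : ℕ+ | s.SameCycle n m}.Finite

/-- The price of the cycle of `n` under the permutation `s`, for box prices `p`. -/
noncomputable def cyclePrice (s : Equiv.Perm ℕ+) (p : ℕ+ → ℝ) (n : ℕ+) : ℝ :=
  ∑' m : {m : ℕ+ | s.SameCycle n m}, p m


namespace Stmt11

variable (g : ℕ → ℕ)

/-- block index of n : the k with g k ≤ n < g (k+1). -/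
def K (n : ℕ) : ℕ := Nat.findGreatest (fun k => g k ≤ n) n

def f (n : ℕ) : ℕ := if n + 1 < g (K g n + 1) then n + 1 else g (K g n)

variable {g}

section
variable (hg : StrictMono g) (hg0 : g 0 = 0)
include hg hg0

lemma self_le_g (k : ℕ) : k ≤ g k := hg.le_apply

lemma K_spec1 (n : ℕ) : g (K g n) ≤ n :=
  Nat.findGreatest_spec (P := fun k => g k ≤ n) (Nat.zero_le n) (by simp [hg0])

lemma K_spec2 (n : ℕ) : n < g (K g n + 1) := by
  by_contra h
  push_neg at h
  have h1 : K g n + 1 ≤ n := le_trans (self_le_g hg hg0 _) h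
  have h2 : K g n + 1 ≤ K g n := Nat.le_findGreatest h1 h
  omega

lemma K_eq {n k : ℕ} (h1 : g k ≤ n) (h2 : n < g (k + 1)) : K g n = k := by
  have hk1 : k ≤ K g n := Nat.le_findGreatest (P := fun j => g j ≤ n) (le_trans (self_le_g hg hg0 _) h1) h1
  have hk2 : K g n ≤ k := by
    by_contra h
    push_neg at h
    exact absurd (le_trans (hg.monotone h) (K_spec1 hg hg0 n)) (not_le.2 h2)
  omega

lemma K_f (n : ℕ) : K g (f g n) = K g n := by
  unfold f
  split_ifs with h
  · exact K_eq hg hg0 (le_trans (K_spec1 hg hg0 n) (Nat.le_succ n)) h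
  · exact K_eq hg hg0 le_rfl (hg (Nat.lt_succ_self _))

lemma eq_of_not_lt {n : ℕ} (h : ¬ n + 1 < g (K g n + 1)) : n + 1 = g (K g n + 1) := by
  have := K_spec2 hg hg0 n
  omega

lemma f_inj : Function.Injective (f g) := by
  intro n m h
  have hKn : K g n = K g m := by
    have h1 := K_f hg hg0 n
    have h2 := K_f hg hg0 m
    rw [h] at h1
    omega
  have hn1 : g (K g n) ≤ n := K_spec1 hg hg0 n
  have hm1 : g (K g m) ≤ m := K_spec1 hg hg0 m
  unfold f at h
  split_ifs at h with h1 h2 h2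
  · omega
  · have e2 := eq_of_not_lt hg hg0 h2
    rw [hKn] at hn1
    omega
  · have e1 := eq_of_not_lt hg hg0 h1
    rw [← hKn] at hm1
    omega
  · have e1 := eq_of_not_lt hg hg0 h1
    have e2 := eq_of_not_lt hg hg0 h2
    rw [hKn] at e1
    omega

lemma f_surj : Function.Surjective (f g) := by
  intro m
  rcases eq_or_lt_of_le (K_spec1 hg hg0 m) with hm | hm
  · -- m = g (K m) : preimage is the top of the block
    refine ⟨g (K g m + 1) - 1, ?_⟩
    have h1 : g (K g m) < g (K g m + 1) := hg (Nat.lt_succ_self _)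
    have h2 : g (K g m) ≤ g (K g m + 1) - 1 := by omega
    have h3 : g (K g m + 1) - 1 < g (K g m + 1) := by omega
    have hK : K g (g (K g m + 1) - 1) = K g m := K_eq hg hg0 h2 h3
    unfold f
    rw [hK]
    rw [if_neg (by omega)]
    omega
  · refine ⟨m - 1, ?_⟩
    have h0 : g (K g m) ≤ m - 1 := by omega
    have h1 : m - 1 < g (K g m + 1) := by
      have := K_spec2 hg hg0 m
      omega
    have hK : K g (m - 1) = K g m := K_eq hg hg0 h0 h1
    unfold f
    rw [hK]
    rw [if_pos (by have := K_spec2 hg hg0 m; omega)]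
    omega

end

noncomputable def tau (hg : StrictMono g) (hg0 : g 0 = 0) : Equiv.Perm ℕ :=
  Equiv.ofBijective (f g) ⟨f_inj hg hg0, f_surj hg hg0⟩

section
variable (hg : StrictMono g) (hg0 : g 0 = 0)

lemma tau_apply (n : ℕ) : tau hg hg0 n = f g n := rfl

lemma K_tau (n : ℕ) : K g (tau hg hg0 n) = K g n := K_f hg hg0 n

lemma K_tau_inv (n : ℕ) : K g ((tau hg hg0)⁻¹ n) = K g n := by
  conv_rhs => rw [← (show tau hg hg0 ((tau hg hg0)⁻¹ n) = n from Equiv.apply_symm_apply _ n)]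
  rw [K_tau]

lemma K_tau_zpow (z : ℤ) : ∀ n, K g ((tau hg hg0 ^ z) n) = K g n := by
  induction z using Int.induction_on with
  | zero => simp
  | succ k ih =>
    intro n
    rw [zpow_add_one, Equiv.Perm.mul_apply, ih, K_tau]
  | pred k ih =>
    intro n
    rw [zpow_sub_one, Equiv.Perm.mul_apply, ih, K_tau_inv]

lemma sameCycle_iff {n m : ℕ} : (tau hg hg0).SameCycle n m ↔ K g n = K g m := by
  constructor
  · rintro ⟨z, rfl⟩
    exact (K_tau_zpow hg hg0 z n).symm
  · intro h
    -- first: SameCycle (g k) (g k + j) for g k + j < g (k+1)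
    have key : ∀ (k j : ℕ), g k + j < g (k + 1) →
        (tau hg hg0).SameCycle (g k) (g k + j) := by
      intro k j
      induction j with
      | zero => intro _; exact Equiv.Perm.SameCycle.refl _ _
      | succ j ih =>
        intro h1
        have h2 : g k + j < g (k + 1) := by omega
        refine (ih h2).trans ⟨1, ?_⟩
        have hK : K g (g k + j) = k := K_eq hg hg0 (by omega) h2
        rw [zpow_one, tau_apply]
        unfold f
        rw [hK, if_pos (by omega)]
        omega
    set k := K g n with hk
    have hn1 : g k ≤ n := K_spec1 hg hg0 n
    have hn2 : n < g (k+1) := K_spec2 hg hg0 n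
    have hm1 : g k ≤ m := h ▸ K_spec1 hg hg0 m
    have hm2 : m < g (k+1) := by rw [h] at hn1 hn2 ⊢; exact K_spec2 hg hg0 m
    have e1 := key k (n - g k) (by omega)
    have e2 := key k (m - g k) (by omega)
    rw [Nat.add_sub_cancel' hn1] at e1
    rw [Nat.add_sub_cancel' hm1] at e2
    exact e1.symm.trans e2

end

end Stmt11

namespace Stmt11

/-- conjugation of a permutation along an equivalence, as respecting `SameCycle`. -/
lemma permCongr_sameCycle {α β : Type*} (c : α ≃ β) (t : Equiv.Perm α) (x y : β) :
    (c.permCongr t).SameCycle x y ↔ t.SameCycle (c.symm x) (c.symm y) := by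
  have hmul : ∀ t1 t2 : Equiv.Perm α,
      c.permCongr (t1 * t2) = c.permCongr t1 * c.permCongr t2 := by
    intro t1 t2
    ext z
    simp [Equiv.Perm.mul_apply]
  let E : Equiv.Perm α ≃* Equiv.Perm β := { c.permCongr with map_mul' := hmul }
  have hz : ∀ z : ℤ, (c.permCongr t) ^ z = c.permCongr (t ^ z) := by
    intro z
    exact (map_zpow E t z).symm
  constructor
  · rintro ⟨z, hzz⟩
    refine ⟨z, ?_⟩
    rw [hz z] at hzz
    simp only [Equiv.permCongr_apply] at hzz
    rw [← hzz]
    simp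
  · rintro ⟨z, hzz⟩
    refine ⟨z, ?_⟩
    rw [hz z]
    simp only [Equiv.permCongr_apply, hzz]
    simp

end Stmt11

theorem stmt_11 (p : ℕ+ → ℝ) (hp : ∀ n, 0 ≤ p n) (hpsum : HasSum p 1)
    (a : ℕ+ → ℝ) (ha : ∀ n, 0 ≤ a n) (hasum : HasSum a 1)
    (hstrat : ∀ σ : Equiv.Perm ℕ+, FiniteCycles σ →
      {n : ℕ+ | cyclePrice σ p n ≤ a n}.Infinite) :
    ∀ δ : Equiv.Perm ℕ+, (∀ n : ℕ+, a (δ (n + 1)) ≤ a (δ n)) →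
      Summable fun n : ℕ+ => (n : ℝ) * p (δ n) := by
  classical
  intro δ hδ
  by_contra hns
  set e : ℕ ≃ ℕ+ := Equiv.pnatEquivNat.symm with he
  have hesucc : ∀ j : ℕ, e (j + 1) = e j + 1 := by
    intro j
    apply PNat.coe_injective
    simp [he, Nat.succPNat]
    rfl
  set q : ℕ → ℝ := fun j => p (δ (e j)) with hqdef
  set b : ℕ → ℝ := fun j => a (δ (e j)) with hbdef
  have hq0 : ∀ j, 0 ≤ q j := fun j => hp _
  have hb0 : ∀ j, 0 ≤ b j := fun j => ha _
  have hbanti : Antitone b := by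
    apply antitone_nat_of_succ_le
    intro j
    show a (δ (e (j + 1))) ≤ a (δ (e j))
    rw [hesucc]
    exact hδ (e j)
  have hqsum : HasSum q 1 := e.hasSum_iff.2 (δ.hasSum_iff.2 hpsum)
  have hbsum : HasSum b 1 := e.hasSum_iff.2 (δ.hasSum_iff.2 hasum)
  -- reduce summability to the ℕ-indexed form
  have hns' : ¬ Summable (fun j : ℕ => ((j : ℝ) + 1) * q j) := by
    intro hs
    apply hns
    rw [← e.summable_iff]
    convert hs using 2 with j
    have : ((e j : ℕ+) : ℕ) = j + 1 := by simp [he, Nat.succPNat]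
    show ((e j : ℕ+) : ℝ) * p (δ (e j)) = ((j : ℝ) + 1) * q j
    rw [hqdef]
    congr 1
    rw [show ((e j : ℕ+) : ℝ) = (((e j : ℕ+) : ℕ) : ℝ) from rfl, this]
    push_cast
    ring
  -- pass to ℝ≥0∞
  set Q : ℕ → ℝ≥0∞ := fun j => ENNReal.ofReal (q j) with hQdef
  set B : ℕ → ℝ≥0∞ := fun j => ENNReal.ofReal (b j) with hBdef
  have hQtot : ∑' j, Q j = 1 := by
    rw [hQdef, ← ENNReal.ofReal_tsum_of_nonneg hq0 hqsum.summable, hqsum.tsum_eq,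
      ENNReal.ofReal_one]
  have hBtot : ∑' j, B j = 1 := by
    rw [hBdef, ← ENNReal.ofReal_tsum_of_nonneg hb0 hbsum.summable, hbsum.tsum_eq,
      ENNReal.ofReal_one]
  have htop : ∑' j : ℕ, ((j : ℝ≥0∞) + 1) * Q j = ⊤ := by
    by_contra h
    apply hns'
    have hsr := ENNReal.summable_toReal h
    have heq : (fun j : ℕ => ((j : ℝ) + 1) * q j)
        = fun j : ℕ => (((j : ℝ≥0∞) + 1) * Q j).toReal := by
      funext j
      rw [ENNReal.toReal_mul, hQdef, ENNReal.toReal_ofReal (hq0 j)]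
      congr 1
    rw [heq]
    exact hsr
  set T : ℕ → ℝ≥0∞ := fun i => ∑' j, if i ≤ j then Q j else 0 with hTdef
  have hT1 : ∀ i, T i ≤ 1 := by
    intro i
    rw [← hQtot]
    exact ENNReal.tsum_le_tsum fun j => by split_ifs <;> simp
  have hTsum : ∑' i, T i = ⊤ := by
    rw [hTdef]
    rw [ENNReal.tsum_comm]
    rw [← htop]
    apply tsum_congr
    intro j
    rw [tsum_eq_sum (s := Finset.range (j + 1))
      (by intro i hi; rw [if_neg]; simp at hi; omega)]
    rw [Finset.sum_congr rfl (fun i hi => if_pos (by simp at hi; omega))]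
    rw [Finset.sum_const, Finset.card_range, nsmul_eq_mul]
    push_cast
    ring
  set G : Set ℕ := {i | 2 * B i < T i} with hGdef
  have hGinf : G.Infinite := by
    intro hfin
    have bound : ∀ i, T i ≤ G.indicator (fun _ => (1 : ℝ≥0∞)) i + 2 * B i := by
      intro i
      by_cases hi : i ∈ G
      · rw [Set.indicator_of_mem hi]
        exact le_add_right (hT1 i)
      · rw [Set.indicator_of_notMem hi]
        have : ¬ (2 * B i < T i) := hi
        push_neg at this
        simpa using this
    have hle : ∑' i, T i ≤ ∑' i, (G.indicator (fun _ => (1 : ℝ≥0∞)) i + 2 * B i) :=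
      ENNReal.tsum_le_tsum bound
    rw [ENNReal.tsum_add, ENNReal.tsum_mul_left, hBtot, hTsum] at hle
    have hind : ∑' i, G.indicator (fun _ => (1 : ℝ≥0∞)) i ≠ ⊤ := by
      rw [tsum_eq_sum (s := hfin.toFinset)
        (fun i hi => Set.indicator_of_notMem (by simpa using hi) _)]
      refine (ENNReal.sum_lt_top.2 fun i _ => ?_).ne
      have hle1 : G.indicator (fun _ => (1 : ℝ≥0∞)) i ≤ 1 := by
        by_cases hi : i ∈ G <;> simp [hi]
      exact lt_of_le_of_lt hle1 (by simp)
    have h2 : ∑' i, G.indicator (fun _ => (1 : ℝ≥0∞)) i + 2 * 1 ≠ ⊤ := by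
      rw [mul_one]
      exact ENNReal.add_ne_top.2 ⟨hind, by simp⟩
    exact h2 (top_le_iff.1 hle)
  have hGgt : ∀ N : ℕ, ∃ m ∈ G, N < m := by
    intro N
    by_contra hcon
    push_neg at hcon
    exact hGinf (Set.Finite.subset (Set.finite_Iic N) hcon)
  have hstep : ∀ n : ℕ, ∃ m : ℕ, n < m ∧ m ∈ G ∧
      (n ∈ G → 2 * b n < ∑ j ∈ Finset.Ico n m, q j) := by
    intro n
    by_cases hn : n ∈ G
    · have h1 : 2 * B n < T n := hn
      have h1' : 2 * B n < ⨆ s : Finset ℕ, ∑ j ∈ s, (if n ≤ j then Q j else 0) := by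
        rw [← ENNReal.tsum_eq_iSup_sum]
        exact h1
      obtain ⟨s, hs⟩ := lt_iSup_iff.1 h1'
      obtain ⟨m, hmG, hmlt⟩ := hGgt (max (s.sup id + 1) n)
      refine ⟨m, lt_of_le_of_lt (le_max_right _ _) hmlt, hmG, fun _ => ?_⟩
      have hsub : ∑ j ∈ s, (if n ≤ j then Q j else 0) ≤ ∑ j ∈ Finset.Ico n m, Q j := by
        rw [← Finset.sum_filter]
        apply Finset.sum_le_sum_of_subset
        intro j hj
        rw [Finset.mem_filter] at hj
        rw [Finset.mem_Ico]
        refine ⟨hj.2, ?_⟩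
        have h3 := Finset.le_sup (f := id) hj.1
        have hNm : s.sup id + 1 ≤ m := le_trans (le_max_left _ _) hmlt.le
        simp only [id] at h3
        omega
      have hlt : 2 * B n < ∑ j ∈ Finset.Ico n m, Q j := lt_of_lt_of_le hs hsub
      have hofr : ∑ j ∈ Finset.Ico n m, Q j
          = ENNReal.ofReal (∑ j ∈ Finset.Ico n m, q j) := by
        rw [ENNReal.ofReal_sum_of_nonneg (fun j _ => hq0 j)]
      have h2B : 2 * B n = ENNReal.ofReal (2 * b n) := by
        rw [ENNReal.ofReal_mul (by norm_num : (0:ℝ) ≤ 2), ENNReal.ofReal_ofNat]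
      rw [hofr, h2B] at hlt
      exact (ENNReal.ofReal_lt_ofReal_iff_of_nonneg (by have := hb0 n; linarith)).1 hlt
    · obtain ⟨m, hmG, hmlt⟩ := hGgt n
      exact ⟨m, hmlt, hmG, fun h => absurd h hn⟩
  choose step hstep1 hstep2 hstep3 using hstep
  set g : ℕ → ℕ := fun k => Nat.rec 0 (fun _ ih => step ih) k with hgdef
  have hg0 : g 0 = 0 := rfl
  have hgsucc : ∀ k, g (k + 1) = step (g k) := fun k => rfl
  have hg : StrictMono g :=
    strictMono_nat_of_lt_succ (fun k => by rw [hgsucc]; exact hstep1 (g k))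
  have hgG : ∀ k, g (k + 1) ∈ G := fun k => by rw [hgsucc]; exact hstep2 (g k)
  have hGood : ∀ k, 2 * b (g (k + 1)) < ∑ j ∈ Finset.Ico (g (k + 1)) (g (k + 2)), q j := by
    intro k
    have h4 := hstep3 (g (k + 1)) (hgG k)
    rw [hgsucc (k + 1)]
    exact h4
  set c : ℕ ≃ ℕ+ := e.trans δ with hc
  set σ : Equiv.Perm ℕ+ := c.permCongr (Stmt11.tau hg hg0) with hσ
  have hSC : ∀ n m : ℕ+, σ.SameCycle n m ↔
      Stmt11.K g (c.symm n) = Stmt11.K g (c.symm m) := by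
    intro n m
    rw [hσ, Stmt11.permCongr_sameCycle, Stmt11.sameCycle_iff hg hg0]
  have hblock : ∀ n : ℕ+, {m : ℕ+ | σ.SameCycle n m}
      = ↑((Finset.Ico (g (Stmt11.K g (c.symm n)))
          (g (Stmt11.K g (c.symm n) + 1))).map c.toEmbedding) := by
    intro n
    ext m
    simp only [Set.mem_setOf_eq, hSC, Finset.coe_map, Set.mem_image, Finset.mem_coe,
      Finset.mem_Ico, Equiv.coe_toEmbedding]
    constructor
    · intro h
      refine ⟨c.symm m, ⟨?_, ?_⟩, by simp⟩
      · rw [h]; exact Stmt11.K_spec1 hg hg0 _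
      · rw [h]; exact Stmt11.K_spec2 hg hg0 _
    · rintro ⟨i, ⟨hi1, hi2⟩, rfl⟩
      rw [Equiv.symm_apply_apply]
      exact (Stmt11.K_eq hg hg0 hi1 hi2).symm
  have hfc : FiniteCycles σ := by
    intro n
    rw [hblock n]
    exact Finset.finite_toSet _
  have hcp : ∀ n : ℕ+, cyclePrice σ p n
      = ∑ i ∈ Finset.Ico (g (Stmt11.K g (c.symm n)))
          (g (Stmt11.K g (c.symm n) + 1)), q i := by
    intro n
    unfold cyclePrice
    rw [tsum_subtype, hblock n]
    rw [tsum_eq_sum (s := (Finset.Ico (g (Stmt11.K g (c.symm n)))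
          (g (Stmt11.K g (c.symm n) + 1))).map c.toEmbedding)
      (fun m hm => Set.indicator_of_notMem (by simpa using hm) _)]
    rw [Finset.sum_congr rfl (fun m hm => Set.indicator_of_mem (by simpa using hm) _)]
    rw [Finset.sum_map]
    apply Finset.sum_congr rfl
    intro i _
    simp only [Equiv.coe_toEmbedding, hc, hqdef, Equiv.trans_apply]
  have hbad : {n : ℕ+ | cyclePrice σ p n ≤ a n} ⊆ {n : ℕ+ | c.symm n < g 1} := by
    intro n hn
    simp only [Set.mem_setOf_eq] at hn ⊢
    by_contra hcon
    push_neg at hcon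
    obtain ⟨k', hkk⟩ : ∃ k', Stmt11.K g (c.symm n) = k' + 1 := by
      refine ⟨Stmt11.K g (c.symm n) - 1, ?_⟩
      rcases Nat.eq_zero_or_pos (Stmt11.K g (c.symm n)) with h0 | h1
      · exfalso
        have h2 := Stmt11.K_spec2 hg hg0 (c.symm n)
        rw [h0] at h2
        norm_num at h2
        omega
      · omega
    have hsum := hGood k'
    have hcpn := hcp n
    rw [hkk] at hcpn
    have han : a n = b (c.symm n) := by
      rw [hbdef]
      congr 1
      exact (c.apply_symm_apply n).symm
    have hjk : g (k' + 1) ≤ c.symm n := by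
      have h5 := Stmt11.K_spec1 hg hg0 (c.symm n)
      rw [hkk] at h5
      exact h5
    have hble : b (c.symm n) ≤ b (g (k' + 1)) := hbanti hjk
    have hlt2 : a n < cyclePrice σ p n := by
      rw [hcpn, han]
      have hb1 := hb0 (g (k' + 1))
      have : (g (k' + 1) + 1 + 1) = (g (k' + 2) + 0) ∨ True := Or.inr trivial
      calc b (c.symm n) ≤ b (g (k' + 1)) := hble
        _ ≤ 2 * b (g (k' + 1)) := by linarith
        _ < ∑ j ∈ Finset.Ico (g (k' + 1)) (g (k' + 2)), q j := hsum
        _ = ∑ i ∈ Finset.Ico (g (k' + 1)) (g (k' + 1 + 1)), q i := by norm_num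
    linarith
  have hfinbad : {n : ℕ+ | c.symm n < g 1}.Finite := by
    have heq2 : {n : ℕ+ | c.symm n < g 1} = c.symm ⁻¹' (Set.Iio (g 1)) := rfl
    rw [heq2]
    exact (Set.finite_Iio (g 1)).preimage (c.symm.injective.injOn)
  exact absurd ((hstrat σ hfc).mono hbad) (Set.not_infinite.2 hfinbad)
end

section
/- Let p : ℕ⁺ → ℝ with p_n ≥ 0 and ∑_{n=1}^∞ p_n = 1, and let k be a positive integer. Then there exists a sequence a : ℕ⁺ → ℝ with a_n ≥ 0 and ∑_{n=1}^∞ a_n ≤ 1 such that for every finite-cycle-permutation σ of the positive integers all of whose orbits have cardinality at most k, the set {n : a_n ≥ ∑_{m ∈ orbit_σ(n)} p_m} is infinite. -/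
open scoped BigOperators ENNReal

lemma finite_ge (p : ℕ+ → ℝ) (hsum : Summable p) {ε : ℝ} (hε : 0 < ε) :
    {n : ℕ+ | ε ≤ p n}.Finite := by
  have h := (hsum.tendsto_cofinite_zero.eventually (gt_mem_nhds hε))
  rw [Filter.eventually_cofinite] at h
  exact h.subset fun n hn => not_lt.mpr hn

lemma small_eps (p : ℕ+ → ℝ) (hp : ∀ n, 0 ≤ p n) (hpsum : HasSum p 1)
    {δ : ℝ} (hδ : 0 < δ) :
    ∃ ε : ℝ, 0 < ε ∧ ε ≤ δ ∧ ε * ({n : ℕ+ | ε ≤ p n}.ncard : ℝ) ≤ δ := by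
  -- find F with 1 - δ/2 < ∑ F p
  have h1 : (1 : ℝ) - δ/2 < 1 := by linarith
  have hev : ∀ᶠ F in Filter.atTop, (1:ℝ) - δ/2 < ∑ n ∈ F, p n :=
    hpsum.eventually (lt_mem_nhds h1)
  obtain ⟨F, hF⟩ := hev.exists
  set ε : ℝ := min (δ/2) (δ / (2 * (F.card + 1))) with hεdef
  have hcard : (0:ℝ) < 2 * (F.card + 1) := by positivity
  have hε : 0 < ε := lt_min (by linarith) (by positivity)
  refine ⟨ε, hε, (min_le_left _ _).trans (by linarith), ?_⟩
  have hGfin : {n : ℕ+ | ε ≤ p n}.Finite := finite_ge p hpsum.summable hε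
  set G : Finset ℕ+ := hGfin.toFinset with hGdef
  have hncard : {n : ℕ+ | ε ≤ p n}.ncard = G.card := by
    rw [hGdef, ← Set.ncard_coe_finset, Set.Finite.coe_toFinset]
  -- ε * (G \ F).card ≤ δ/2
  have hsum2 : ∑ n ∈ F ∪ (G \ F), p n ≤ 1 :=
    sum_le_hasSum _ (fun i _ => hp i) hpsum
  rw [Finset.sum_union (Finset.disjoint_sdiff)] at hsum2
  have htail : ∑ n ∈ G \ F, p n ≤ δ/2 := by linarith
  have hbound : ε * ((G \ F).card : ℝ) ≤ δ/2 := by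
    have : ((G \ F).card : ℝ) * ε ≤ ∑ n ∈ G \ F, p n := by
      have := Finset.card_nsmul_le_sum (G \ F) p ε ?_
      · simpa [nsmul_eq_mul] using this
      · intro x hx
        have := (Finset.mem_sdiff.mp hx).1
        rw [hGdef, Set.Finite.mem_toFinset] at this
        exact this
    linarith [mul_comm ε ((G \ F).card : ℝ)]
  have hcardsplit : (G.card : ℝ) ≤ (F.card : ℝ) + ((G \ F).card : ℝ) := by
    have : G.card ≤ F.card + (G \ F).card := by
      calc G.card ≤ (F ∪ (G \ F)).card := Finset.card_le_card (by
              intro x hx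
              by_cases hxF : x ∈ F
              · exact Finset.mem_union_left _ hxF
              · exact Finset.mem_union_right _ (Finset.mem_sdiff.mpr ⟨hx, hxF⟩))
        _ ≤ F.card + (G \ F).card := Finset.card_union_le _ _
    exact_mod_cast this
  have hεF : ε * (F.card : ℝ) ≤ δ/2 := by
    have h2 : ε ≤ δ / (2 * (F.card + 1)) := min_le_right _ _
    have : ε * (F.card : ℝ) ≤ (δ / (2 * (F.card + 1))) * (F.card : ℝ) :=
      mul_le_mul_of_nonneg_right h2 (by positivity)
    calc ε * (F.card : ℝ) ≤ (δ / (2 * (F.card + 1))) * (F.card : ℝ) := this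
      _ ≤ δ/2 := by
          rw [div_mul_eq_mul_div, div_le_iff₀ hcard]
          ring_nf
          nlinarith [Nat.cast_nonneg (α := ℝ) F.card]
  rw [hncard]
  calc ε * (G.card : ℝ) ≤ ε * ((F.card : ℝ) + ((G \ F).card : ℝ)) :=
        mul_le_mul_of_nonneg_left hcardsplit hε.le
    _ = ε * (F.card : ℝ) + ε * ((G \ F).card : ℝ) := by ring
    _ ≤ δ/2 + δ/2 := add_le_add hεF hbound
    _ = δ := by ring

theorem stmt_12 (p : ℕ+ → ℝ) (hp : ∀ n, 0 ≤ p n) (hpsum : HasSum p 1)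
    (k : ℕ+) :
    ∃ a : ℕ+ → ℝ, (∀ n, 0 ≤ a n) ∧ Summable a ∧ (∑' n, a n) ≤ 1 ∧
      ∀ σ : Equiv.Perm ℕ+, FiniteCycles σ →
        (∀ n : ℕ+, ({m : ℕ+ | σ.SameCycle n m}).ncard ≤ k) →
        {n : ℕ+ | cyclePrice σ p n ≤ a n}.Infinite := by
  have hK : (0:ℝ) < (k:ℝ)^2 + (k:ℝ) := by positivity
  have hδpos : ∀ m : ℕ, (0:ℝ) < (1/2)^(m+1) / ((k:ℝ)^2 + (k:ℝ)) := by
    intro m; positivity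
  choose ε hε0 hεδ hεN using fun m : ℕ => small_eps p hp hpsum (hδpos m)
  set N : ℕ → ℕ := fun m => {n : ℕ+ | ε m ≤ p n}.ncard with hN
  set L : ℕ → ℕ := fun m => (k : ℕ) * N m + 1 with hL
  set E : ℕ+ ≃ ℕ × ℕ := Equiv.pnatEquivNat.trans (Denumerable.eqv (ℕ × ℕ)).symm with hE
  set f : ℕ × ℕ → ℝ := fun q => if q.2 < L q.1 then (k:ℝ) * ε q.1 else 0 with hf
  have hf0 : ∀ q, 0 ≤ f q := by
    intro q; rw [hf]; dsimp only
    split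
    · exact mul_nonneg (by positivity) (hε0 _).le
    · exact le_refl 0
  have hfzero : ∀ m : ℕ, ∀ i ∉ Finset.range (L m), f (m, i) = 0 := by
    intro m i hi
    rw [hf]; dsimp only
    rw [if_neg (by simpa using hi)]
  have hrowsum : ∀ m : ℕ, ∑' i : ℕ, f (m, i) = (L m : ℝ) * ((k:ℝ) * ε m) := by
    intro m
    rw [tsum_eq_sum (hfzero m)]
    calc ∑ i ∈ Finset.range (L m), f (m, i)
        = ∑ _i ∈ Finset.range (L m), (k:ℝ) * ε m := by
          refine Finset.sum_congr rfl fun i hi => ?_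
          rw [hf]; dsimp only
          rw [if_pos (Finset.mem_range.mp hi)]
      _ = (L m : ℝ) * ((k:ℝ) * ε m) := by
          rw [Finset.sum_const, Finset.card_range, nsmul_eq_mul]
  have hrowbound : ∀ m : ℕ, (L m : ℝ) * ((k:ℝ) * ε m) ≤ (1/2)^(m+1) := by
    intro m
    have h1 := hεδ m
    have h2 : ε m * ((N m : ℕ) : ℝ) ≤ (1/2)^(m+1) / ((k:ℝ)^2 + (k:ℝ)) := hεN m
    have hLcast : (L m : ℝ) = (k:ℝ) * (N m : ℝ) + 1 := by
      rw [hL]; push_cast; ring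
    rw [hLcast]
    have hkpos : (0:ℝ) < (k:ℝ) := by exact_mod_cast k.pos
    have hNn : (0:ℝ) ≤ (N m : ℝ) := Nat.cast_nonneg _
    have expand : ((k:ℝ) * (N m) + 1) * ((k:ℝ) * ε m)
        = (k:ℝ)^2 * (ε m * (N m)) + (k:ℝ) * ε m := by ring
    rw [expand]
    have hb1 : (k:ℝ)^2 * (ε m * (N m)) ≤ (k:ℝ)^2 * ((1/2)^(m+1) / ((k:ℝ)^2 + (k:ℝ))) :=
      mul_le_mul_of_nonneg_left h2 (by positivity)
    have hb2 : (k:ℝ) * ε m ≤ (k:ℝ) * ((1/2)^(m+1) / ((k:ℝ)^2 + (k:ℝ))) :=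
      mul_le_mul_of_nonneg_left h1 hkpos.le
    have : (k:ℝ)^2 * ((1/2)^(m+1) / ((k:ℝ)^2 + (k:ℝ)))
        + (k:ℝ) * ((1/2)^(m+1) / ((k:ℝ)^2 + (k:ℝ))) = (1/2)^(m+1) := by
      field_simp
    linarith
  have hgeom : Summable fun m : ℕ => ((1:ℝ)/2)^(m+1) := by
    have := (summable_geometric_of_lt_one (by norm_num : (0:ℝ) ≤ 1/2)
      (by norm_num : (1:ℝ)/2 < 1)).mul_right (1/2)
    exact this.congr fun m => by rw [pow_succ]
  have hgeomsum : ∑' m : ℕ, ((1:ℝ)/2)^(m+1) = 1 := by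
    have h := tsum_geometric_of_lt_one (by norm_num : (0:ℝ) ≤ 1/2)
      (by norm_num : (1:ℝ)/2 < 1)
    calc ∑' m : ℕ, ((1:ℝ)/2)^(m+1) = ∑' m : ℕ, ((1:ℝ)/2)^m * (1/2) := by
          exact tsum_congr fun m => by rw [pow_succ]
      _ = (1 - 1/2:ℝ)⁻¹ * (1/2) := by rw [tsum_mul_right, h]
      _ = 1 := by norm_num
  have hrowsummable : ∀ m : ℕ, Summable fun i : ℕ => f (m, i) :=
    fun m => summable_of_ne_finset_zero (hfzero m)
  have htopsummable : Summable fun m : ℕ => ∑' i : ℕ, f (m, i) := by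
    refine Summable.of_nonneg_of_le (fun m => ?_) (fun m => ?_) hgeom
    · exact tsum_nonneg fun i => hf0 _
    · rw [hrowsum m]; exact hrowbound m
  have hfsummable : Summable f :=
    (summable_prod_of_nonneg hf0).mpr ⟨hrowsummable, htopsummable⟩
  have hfsum_le : ∑' q : ℕ × ℕ, f q ≤ 1 := by
    rw [Summable.tsum_prod hfsummable, ← hgeomsum]
    refine Summable.tsum_le_tsum (fun m => ?_) htopsummable hgeom
    rw [hrowsum m]; exact hrowbound m
  refine ⟨fun n => f (E n), fun n => hf0 _, ?_, ?_, ?_⟩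
  · exact (E.summable_iff (f := f)).mpr hfsummable
  · calc ∑' n : ℕ+, f (E n) = ∑' q : ℕ × ℕ, f q := E.tsum_eq f
      _ ≤ 1 := hfsum_le
  · intro σ hfc hk
    have key : ∀ m : ℕ, ∃ n : ℕ+, (E n).1 = m ∧ cyclePrice σ p n ≤ f (E n) := by
      intro m
      have hB : {n : ℕ+ | ε m ≤ p n}.Finite := finite_ge p hpsum.summable (hε0 m)
      set BF : Finset ℕ+ := hB.toFinset with hBF
      classical
      set TF : Finset ℕ+ := BF.biUnion (fun b => (hfc b).toFinset) with hTF
      have hTFcard : TF.card ≤ N m * (k:ℕ) := by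
        calc TF.card ≤ ∑ b ∈ BF, ((hfc b).toFinset).card := Finset.card_biUnion_le
          _ ≤ BF.card • (k:ℕ) := Finset.sum_le_card_nsmul _ _ _ (fun b _ => by
              rw [← Set.ncard_coe_finset, Set.Finite.coe_toFinset]
              exact hk b)
          _ = N m * (k:ℕ) := by
              rw [smul_eq_mul, hN]
              congr 1
              rw [hBF, ← Set.ncard_coe_finset, Set.Finite.coe_toFinset]
      have hwit : ∃ i, i < L m ∧ E.symm (m, i) ∉ (TF : Set ℕ+) := by
        by_contra hcon
        push_neg at hcon
        have hg : ∀ i : Fin (L m), E.symm (m, i.1) ∈ TF := fun i => hcon i.1 i.2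
        have hinj : Function.Injective (fun i : Fin (L m) => (⟨E.symm (m, i.1), hg i⟩ : {x // x ∈ TF})) := by
          intro i j hij
          have := congrArg (fun x : {x // x ∈ TF} => (E x.1).2) hij
          simp only [Equiv.apply_symm_apply] at this
          exact Fin.ext this
        have := Nat.card_le_card_of_injective _ hinj
        rw [Nat.card_eq_fintype_card, Fintype.card_fin, Nat.card_eq_fintype_card,
          Fintype.card_coe] at this
        have hLm : L m = (k:ℕ) * N m + 1 := rfl
        have hmc : N m * (k:ℕ) = (k:ℕ) * N m := Nat.mul_comm _ _
        omega
      obtain ⟨i, hiL, hiT⟩ := hwit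
      refine ⟨E.symm (m, i), by simp, ?_⟩
      have hEval : E (E.symm (m, i)) = (m, i) := E.apply_symm_apply _
      set n : ℕ+ := E.symm (m, i) with hn
      have han : f (E n) = (k:ℝ) * ε m := by
        rw [hEval, hf]; dsimp only
        rw [if_pos hiL]
      rw [han]
      -- bound the cycle price
      have hO : {x : ℕ+ | σ.SameCycle n x}.Finite := hfc n
      have hsmall : ∀ x ∈ {x : ℕ+ | σ.SameCycle n x}, p x ≤ ε m := by
        intro x hx
        by_contra hge
        push_neg at hge
        apply hiT
        have hxB : x ∈ BF := by rw [hBF, Set.Finite.mem_toFinset]; exact hge.le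
        rw [hTF]
        simp only [Finset.coe_biUnion, Set.mem_iUnion]
        exact ⟨x, hxB, by simp only [Set.Finite.coe_toFinset]; exact hx.symm⟩
      haveI := hO.fintype
      rw [cyclePrice, tsum_fintype]
      calc ∑ x : {x : ℕ+ | σ.SameCycle n x}, p x
          ≤ (Finset.univ.card : ℕ) • ε m :=
            Finset.sum_le_card_nsmul _ _ _ (fun x _ => hsmall x.1 x.2)
        _ = (Fintype.card {x : ℕ+ | σ.SameCycle n x} : ℝ) * ε m := by
            rw [Finset.card_univ, nsmul_eq_mul]
        _ ≤ (k:ℝ) * ε m := by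
            refine mul_le_mul_of_nonneg_right ?_ (hε0 m).le
            have : Fintype.card {x : ℕ+ | σ.SameCycle n x} = ({x : ℕ+ | σ.SameCycle n x}).ncard := by
              rw [← Nat.card_coe_set_eq, Nat.card_eq_fintype_card]
            rw [this]
            exact_mod_cast hk n
    choose w hw1 hw2 using key
    refine Set.infinite_of_injective_forall_mem (f := w) ?_ (fun m => hw2 m)
    intro m m' hmm
    rw [← hw1 m, ← hw1 m', hmm]
end

section
/- Let p : ℕ⁺ → ℝ with p_n > 0 for all n and ∑_{n=1}^∞ p_n = 1. Then for every sequence a : ℕ⁺ → ℝ with a_n ≥ 0 and ∑_{n=1}^∞ a_n = 1, there exists a finite-cycle-permutation σ of the positive integers such that the set {n : a_n < ∑_{m ∈ orbit_σ(n)} p_m} is infinite (i.e., in Version 1.b, where release requires all but finitely many prisoners to find their labels, there is no strategy in general). -/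
open scoped BigOperators ENNReal

/-- the "partner" index: `2k ↔ 2k+1`. -/
def pairInv (j : ℕ) : ℕ := if j % 2 = 0 then j + 1 else j - 1

lemma pairInv_even (k : ℕ) : pairInv (2 * k) = 2 * k + 1 := by
  simp [pairInv, Nat.mul_mod_right]

lemma pairInv_odd (k : ℕ) : pairInv (2 * k + 1) = 2 * k := by
  simp only [pairInv]
  rw [if_neg (by omega)]
  omega

lemma pairInv_pairInv (j : ℕ) : pairInv (pairInv j) = j := by
  rcases Nat.even_or_odd j with ⟨k, rfl⟩ | ⟨k, rfl⟩
  · rw [show k + k = 2 * k by omega, pairInv_even, pairInv_odd]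
  · rw [pairInv_odd, pairInv_even]

theorem stmt_13 (p : ℕ+ → ℝ) (hp : ∀ n, 0 < p n) (hpsum : HasSum p 1) :
    ∀ a : ℕ+ → ℝ, (∀ n, 0 ≤ a n) → HasSum a 1 →
      ∃ σ : Equiv.Perm ℕ+, FiniteCycles σ ∧
        {n : ℕ+ | a n < cyclePrice σ p n}.Infinite := by
  intro a ha hasum
  classical
  have hsumm : Summable a := hasum.summable
  -- key step: beyond any point there is an index with small `a`
  have key : ∀ x : ℕ+, ∃ N : ℕ+, x < N ∧ a N < p x := by
    intro x
    have h1 : {N : ℕ+ | a N < p x} ∈ Filter.cofinite :=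
      hsumm.tendsto_cofinite_zero.eventually (gt_mem_nhds (hp x))
    have h3 : {N : ℕ+ | x < N} ∈ Filter.cofinite := by
      rw [Filter.mem_cofinite]
      have : {N : ℕ+ | x < N}ᶜ = Set.Iic x := by ext; simp [not_lt]
      rw [this]; exact Set.finite_Iic x
    obtain ⟨N, hN1, hN2⟩ := Filter.nonempty_of_mem (Filter.inter_mem h3 h1)
    exact ⟨N, hN1, hN2⟩
  choose next hnext1 hnext2 using key
  -- the recursively defined sequence
  obtain ⟨c, hcsucc⟩ : ∃ c : ℕ → ℕ+,
      ∀ n, c (n + 1) = if n % 2 = 0 then next (c n) else c n + 1 :=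
    ⟨fun n => Nat.rec 1 (fun m ih => if m % 2 = 0 then next ih else ih + 1) n, fun _ => rfl⟩
  have hmono : StrictMono c := by
    apply strictMono_nat_of_lt_succ
    intro n
    rw [hcsucc]
    split
    · exact hnext1 _
    · exact PNat.lt_add_right _ _
  have hinj : Function.Injective c := hmono.injective
  have hcp : ∀ k, c (2 * k + 1) = next (c (2 * k)) := by
    intro k
    rw [hcsucc]
    simp [Nat.mul_mod_right]
  -- the involution
  obtain ⟨f, hf1, hf2⟩ : ∃ f : ℕ+ → ℕ+,
      (∀ j, f (c j) = c (pairInv j)) ∧ (∀ x, (∀ j, c j ≠ x) → f x = x) := by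
    refine ⟨fun x => if h : ∃ j, c j = x then c (pairInv h.choose) else x, ?_, ?_⟩
    · intro j
      have h : ∃ j', c j' = c j := ⟨j, rfl⟩
      simp only [dif_pos h]
      rw [hinj h.choose_spec]
    · intro x hx
      have hnx : ¬ ∃ j, c j = x := by
        rintro ⟨j, hj⟩; exact hx j hj
      simp only [dif_neg hnx]
  have hfinv : Function.Involutive f := by
    intro x
    by_cases h : ∃ j, c j = x
    · obtain ⟨j, rfl⟩ := h
      rw [hf1, hf1, pairInv_pairInv]
    · push_neg at h
      simp only [hf2 x h]
  obtain ⟨σ, hσapp⟩ : ∃ σ : Equiv.Perm ℕ+, ∀ x, σ x = f x := ⟨hfinv.toPerm, fun _ => rfl⟩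
  have hσ2 : σ * σ = 1 := by
    ext x
    simp only [Equiv.Perm.mul_apply, Equiv.Perm.one_apply, hσapp]
    exact hfinv x
  -- orbits are contained in {n, σ n}
  have horb : ∀ n m : ℕ+, σ.SameCycle n m → m = n ∨ m = σ n := by
    rintro n m ⟨i, rfl⟩
    rcases Int.even_or_odd i with ⟨k, rfl⟩ | ⟨k, rfl⟩
    · left
      have : σ ^ (k + k) = 1 := by
        rw [← two_mul, zpow_mul, zpow_two, hσ2, one_zpow]
      rw [this]; rfl
    · right
      have : σ ^ (2 * k + 1) = σ := by
        rw [zpow_add, zpow_mul, zpow_two, hσ2, one_zpow, one_mul, zpow_one]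
      rw [this]
  have horbset : ∀ n : ℕ+, {m : ℕ+ | σ.SameCycle n m} = {n, σ n} := by
    intro n
    ext m
    simp only [Set.mem_setOf_eq, Set.mem_insert_iff, Set.mem_singleton_iff]
    constructor
    · exact horb n m
    · rintro (rfl | rfl)
      · exact Equiv.Perm.SameCycle.refl _ _
      · exact ⟨1, by rw [zpow_one]⟩
  refine ⟨σ, ?_, ?_⟩
  · intro n
    rw [horbset]
    exact (Set.finite_singleton _).insert _
  · refine Set.infinite_of_injective_forall_mem
      (f := fun k : ℕ => c (2 * k + 1)) ?_ ?_
    · intro i j hij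
      simp only at hij
      have := hinj hij
      omega
    · intro k
      simp only [Set.mem_setOf_eq]
      have hσc : σ (c (2 * k + 1)) = c (2 * k) := by
        rw [hσapp, hf1, pairInv_odd]
      have hne : c (2 * k + 1) ≠ σ (c (2 * k + 1)) := by
        rw [hσc]
        intro h
        have := hinj h
        omega
      have hcp' : cyclePrice σ p (c (2 * k + 1)) = p (c (2 * k + 1)) + p (c (2 * k)) := by
        rw [cyclePrice, horbset]
        have : ({c (2 * k + 1), σ (c (2 * k + 1))} : Set ℕ+)
            = (↑({c (2 * k + 1), σ (c (2 * k + 1))} : Finset ℕ+) : Set ℕ+) := by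
          simp
        rw [this, Finset.tsum_subtype', Finset.sum_pair hne, hσc]
      rw [hcp', hcp k]
      have h1 := hnext2 (c (2 * k))
      have h2 := hp (next (c (2 * k)))
      linarith
end

section
/- Let p : ℕ⁺ → ℝ with p_n ≥ 0 and ∑_{n=1}^∞ p_n = 1, let δ be a permutation of the positive integers with ∑_{n=1}^∞ n·p_{δ(n)} < ∞, and let d be a positive integer. Then there exists a sequence a : ℕ⁺ → ℝ with a_n ≥ 0 and ∑_{n=1}^∞ a_n ≤ 1 such that for every finite-cycle-permutation σ of the positive integers with the property that every orbit O of σ satisfies max(δ⁻¹(O)) − min(δ⁻¹(O)) ≤ d (bounded diameter in the δ-reordered indexing), the set {n : a_n < ∑_{m ∈ orbit_σ(n)} p_m} is finite. -/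
open scoped BigOperators ENNReal

set_option maxHeartbeats 1000000 in
theorem stmt_14 (p : ℕ+ → ℝ) (hp : ∀ n, 0 ≤ p n) (hpsum : HasSum p 1)
    (δ : Equiv.Perm ℕ+) (hδ : Summable fun n : ℕ+ => (n : ℝ) * p (δ n))
    (d : ℕ+) :
    ∃ a : ℕ+ → ℝ, (∀ n, 0 ≤ a n) ∧ Summable a ∧ (∑' n, a n) ≤ 1 ∧
      ∀ σ : Equiv.Perm ℕ+, FiniteCycles σ →
        (∀ n m : ℕ+, σ.SameCycle n m → ((δ.symm n : ℕ) : ℤ) - ((δ.symm m : ℕ) : ℤ) ≤ (d : ℤ)) →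
        {n : ℕ+ | a n < cyclePrice σ p n}.Finite := by
  classical
  set q : ℕ+ → ℝ := fun k => p (δ k) with hq
  have hq0 : ∀ k, 0 ≤ q k := fun k => hp _
  have hqsum : Summable q := (Equiv.summable_iff δ).mpr hpsum.summable
  -- the double-indexed function
  set G : ℕ+ × ℕ+ → ℝ := fun x => if (x.2 : ℕ) ≤ (x.1 : ℕ) + (d : ℕ) then q x.1 else 0 with hG
  have hG0 : 0 ≤ G := by
    intro x
    by_cases h : (x.2 : ℕ) ≤ (x.1 : ℕ) + (d : ℕ) <;> simp [hG, h, hq0]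
  have hGrow : ∀ k : ℕ+, ∀ i ∉ Finset.Icc 1 (k + d), G (k, i) = 0 := by
    intro k i hi
    have : ¬ i ≤ k + d := by simpa using hi
    have : ¬ (i : ℕ) ≤ (k : ℕ) + (d : ℕ) := by
      intro h; exact this (by exact_mod_cast (by simpa [PNat.add_coe] using h : (i:ℕ) ≤ ((k+d : ℕ+):ℕ)))
    simp [hG, this]
  have hGrowsum : ∀ k : ℕ+, ∑' i, G (k, i) = ((k : ℕ) + (d : ℕ)) * q k := by
    intro k
    rw [tsum_eq_sum (hGrow k)]
    have hcond : ∀ i ∈ Finset.Icc (1:ℕ+) (k + d), G (k, i) = q k := by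
      intro i hi
      have : i ≤ k + d := (Finset.mem_Icc.mp hi).2
      have : (i : ℕ) ≤ (k : ℕ) + (d : ℕ) := by
        have := (PNat.coe_le_coe _ _).mpr this
        simpa [PNat.add_coe] using this
      simp [hG, this]
    rw [Finset.sum_congr rfl hcond, Finset.sum_const, PNat.card_Icc]
    have hc : ((k + d : ℕ+) : ℕ) + 1 - ((1 : ℕ+) : ℕ) = (k : ℕ) + (d : ℕ) := by
      simp [PNat.add_coe]
    rw [hc, nsmul_eq_mul]
    norm_cast
  have hGsum : Summable G := by
    rw [summable_prod_of_nonneg hG0]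
    constructor
    · intro k
      exact summable_of_ne_finset_zero (s := Finset.Icc 1 (k + d)) (hGrow k)
    · have : Summable fun k : ℕ+ => ((k : ℕ) + (d : ℕ)) * q k := by
        have h1 : Summable fun k : ℕ+ => (k : ℝ) * q k := hδ
        have h2 : Summable fun k : ℕ+ => ((d : ℕ) : ℝ) * q k := hqsum.mul_left _
        have := h1.add h2
        refine this.congr fun k => ?_
        push_cast
        ring
      exact this.congr fun k => (hGrowsum k).symm
  -- T i : tail sums
  set T : ℕ+ → ℝ := fun i => ∑' k, G (k, i) with hT
  have hT0 : ∀ i, 0 ≤ T i := fun i => tsum_nonneg (fun k => hG0 (k, i))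
  have hTsum : Summable T := by
    have hswap : Summable (fun x : ℕ+ × ℕ+ => G x.swap) := hGsum.prod_symm
    have h0 : 0 ≤ fun x : ℕ+ × ℕ+ => G x.swap := fun x => hG0 x.swap
    exact ((summable_prod_of_nonneg h0).mp hswap).2
  -- choose the finset s with tail ≤ 1
  obtain ⟨s, hs⟩ : ∃ s : Finset ℕ+, ∑' i : {x // x ∉ s}, T i ≤ 1 := by
    have := (tendsto_tsum_compl_atTop_zero T).eventually (eventually_le_nhds one_pos)
    exact this.exists
  -- define a
  set g : ℕ+ → ℝ := fun i => if i ∈ s then 0 else T i with hgdef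
  have hg0 : ∀ i, 0 ≤ g i := by
    intro i; by_cases h : i ∈ s <;> simp [hgdef, h, hT0]
  have hgind : g = Set.indicator (↑s : Set ℕ+)ᶜ T := by
    funext i
    by_cases h : i ∈ s <;> simp [hgdef, h, Set.indicator]
  have hgsum : Summable g := by
    rw [hgind]; exact hTsum.indicator _
  have hgtsum : ∑' i, g i ≤ 1 := by
    have : ∑' i, g i = ∑' i : {x // x ∉ s}, T i := by
      rw [hgind]
      rw [← tsum_subtype]
      rfl
    rw [this]; exact hs
  refine ⟨fun n => g (δ.symm n), fun n => hg0 _, (δ.symm.summable_iff).mpr hgsum, ?_, ?_⟩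
  · rw [Equiv.tsum_eq δ.symm g]; exact hgtsum
  · intro σ hfc hσd
    have key : ∀ n : ℕ+, δ.symm n ∉ s → cyclePrice σ p n ≤ T (δ.symm n) := by
      intro n _
      -- T (δ.symm n) as a subtype tsum
      set j : ℕ+ := δ.symm n with hj
      have hTform : T j = ∑' k : {k : ℕ+ | (j : ℕ) ≤ (k : ℕ) + (d : ℕ)}, q (k : ℕ+) := by
        rw [tsum_subtype]
        show (∑' k, G (k, j)) = _
        refine tsum_congr fun k => ?_
        by_cases h : (j : ℕ) ≤ (k : ℕ) + (d : ℕ) <;> simp [hG, h, Set.indicator]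
      -- reindex to {m | j ≤ δ.symm m + d} with p
      have hre : T j = ∑' m : {m : ℕ+ | (j : ℕ) ≤ ((δ.symm m : ℕ+) : ℕ) + (d : ℕ)}, p (m : ℕ+) := by
        rw [hTform]
        let e : {k : ℕ+ | (j : ℕ) ≤ (k : ℕ) + (d : ℕ)} ≃
            {m : ℕ+ | (j : ℕ) ≤ ((δ.symm m : ℕ+) : ℕ) + (d : ℕ)} :=
          Equiv.subtypeEquiv δ (fun k => by simp [Set.mem_setOf_eq])
        refine (tsum_congr fun k => ?_).trans (Equiv.tsum_eq e (fun m => p (m : ℕ+)))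
        rfl
      rw [hre]
      refine Summable.tsum_le_tsum_of_inj
        (fun m : {m : ℕ+ | σ.SameCycle n m} =>
          (⟨m.1, by
            have := hσd n m.1 m.2
            have hd : ((δ.symm n : ℕ) : ℤ) ≤ ((δ.symm m.1 : ℕ) : ℤ) + (d : ℤ) := by linarith
            exact_mod_cast hd⟩ : {m : ℕ+ | (j : ℕ) ≤ ((δ.symm m : ℕ+) : ℕ) + (d : ℕ)}))
        ?_ ?_ ?_ ?_ ?_
      · intro x y hxy
        ext
        simpa using hxy
      · intro c _; exact hp _
      · intro m; exact le_refl _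
      · have : Finite {m : ℕ+ | σ.SameCycle n m} := (hfc n).to_subtype
        exact Summable.of_finite
      · exact hpsum.summable.subtype _
    have hsub : {n : ℕ+ | g (δ.symm n) < cyclePrice σ p n} ⊆ δ.symm ⁻¹' (↑s) := by
      intro n hn
      have hn' : g (δ.symm n) < cyclePrice σ p n := hn
      by_contra hns
      have hns' : δ.symm n ∉ s := hns
      have h1 : g (δ.symm n) = T (δ.symm n) := by simp [hgdef, hns']
      have hk := key n hns'
      rw [← h1] at hk
      exact absurd hn' (not_lt.mpr hk)
    exact Set.Finite.subset (s.finite_toSet.preimage (δ.symm.injective.injOn)) hsub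
end

section
/- Let p : ℕ⁺ → ℝ with p_n > 0 for all n and ∑_{n=1}^∞ p_n = 1. Then for every sequence a : ℕ⁺ → ℝ with a_n ≥ 0 and ∑_{n=1}^∞ a_n = 1, there exists a permutation σ of the positive integers all of whose orbits have cardinality at most 2, such that the set {n : a_n < ∑_{m ∈ orbit_σ(n)} p_m} is infinite (i.e., in Version 1.b, knowing that all cycles have length at most 2 does not make a strategy possible). -/
open scoped BigOperators ENNReal

lemma invol_zpow {σ : Equiv.Perm ℕ+} (h : σ * σ = 1) (i : ℤ) : σ ^ i = 1 ∨ σ ^ i = σ := by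
  have h2 : σ ^ (2:ℤ) = 1 := by
    rw [show (2:ℤ) = 1+1 by ring, zpow_add, zpow_one, h]
  rcases Int.even_or_odd i with ⟨k, hk⟩ | ⟨k, hk⟩
  · left
    rw [hk, show k + k = 2*k by ring, zpow_mul, h2, one_zpow]
  · right
    rw [hk, zpow_add, zpow_mul, h2, one_zpow, one_mul, zpow_one]

lemma cycle_set_of_invol {σ : Equiv.Perm ℕ+} (h : σ * σ = 1) (n : ℕ+) :
    {m : ℕ+ | σ.SameCycle n m} = {n, σ n} := by
  ext m
  constructor
  · rintro ⟨i, rfl⟩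
    rcases invol_zpow h i with h1 | h1 <;> simp [h1]
  · rintro (rfl | rfl)
    · exact ⟨0, by simp⟩
    · exact ⟨1, by simp⟩

theorem stmt_15 (p : ℕ+ → ℝ) (hp : ∀ n, 0 < p n) (hpsum : HasSum p 1) :
    ∀ a : ℕ+ → ℝ, (∀ n, 0 ≤ a n) → HasSum a 1 →
      ∃ σ : Equiv.Perm ℕ+, FiniteCycles σ ∧
        (∀ n : ℕ+, ({m : ℕ+ | σ.SameCycle n m}).ncard ≤ 2) ∧
        {n : ℕ+ | a n < cyclePrice σ p n}.Infinite := by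
  classical
  intro a _ha hasum
  have hsa : Summable a := hasum.summable
  -- Key: outside any finite set we can find a good pair.
  have key : ∀ F : Finset ℕ+, ∃ q : ℕ+ × ℕ+,
      q.1 ∉ F ∧ q.2 ∉ F ∧ q.1 ≠ q.2 ∧ a q.1 < p q.1 + p q.2 := by
    intro F
    obtain ⟨m, hm⟩ := Infinite.exists_notMem_finset F
    have hten : Filter.Tendsto a Filter.cofinite (nhds 0) := hsa.tendsto_cofinite_zero
    have hev : ∀ᶠ n in Filter.cofinite, a n < p m :=
      hten.eventually_lt_const (hp m)
    have hfin : {n : ℕ+ | ¬ a n < p m}.Finite := Filter.eventually_cofinite.mp hev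
    have hinf : {n : ℕ+ | a n < p m}.Infinite := by
      have := hfin.infinite_compl
      simpa [Set.compl_setOf] using this
    obtain ⟨n, hn1, hn2⟩ := (hinf.diff ((F : Set ℕ+) ∪ {m}).toFinite).nonempty
    simp only [Set.mem_union, Set.mem_singleton_iff, Finset.mem_coe, not_or] at hn2
    refine ⟨(n, m), hn2.1, hm, hn2.2, ?_⟩
    have := hp n
    simp only [Set.mem_setOf_eq] at hn1
    linarith
  -- recursive construction of disjoint pairs
  let Fs : ℕ → Finset ℕ+ := fun k => Nat.rec ∅
    (fun _ Fk => Fk ∪ {(Classical.choose (key Fk)).1, (Classical.choose (key Fk)).2}) k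
  let N : ℕ → ℕ+ := fun k => (Classical.choose (key (Fs k))).1
  let M : ℕ → ℕ+ := fun k => (Classical.choose (key (Fs k))).2
  have hspec : ∀ k, N k ∉ Fs k ∧ M k ∉ Fs k ∧ N k ≠ M k ∧ a (N k) < p (N k) + p (M k) :=
    fun k => Classical.choose_spec (key (Fs k))
  have hFsucc : ∀ k, Fs (k+1) = Fs k ∪ {N k, M k} := fun _ => rfl
  have hstep : ∀ k, Fs k ⊆ Fs (k+1) := by
    intro k
    rw [hFsucc]
    exact Finset.subset_union_left
  have hmono : ∀ j k, j ≤ k → Fs j ⊆ Fs k := by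
    intro j k hjk
    induction k with
    | zero => simp_all
    | succ k ih =>
      rcases Nat.lt_or_ge j (k+1) with h | h
      · exact (ih (Nat.lt_succ_iff.mp h)).trans (hstep k)
      · have : j = k + 1 := le_antisymm hjk h
        subst this; exact Finset.Subset.refl _
  have hmemN : ∀ k, N k ∈ Fs (k+1) := by
    intro k; rw [hFsucc]; simp
  have hmemM : ∀ k, M k ∈ Fs (k+1) := by
    intro k; rw [hFsucc]; simp
  -- injectivity / disjointness
  have hNinj : Function.Injective N := by
    intro j k h
    by_contra hne
    rcases Nat.lt_or_ge j k with hlt | hge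
    · exact (hspec k).1 (h ▸ hmono (j+1) k hlt (hmemN j))
    · have hlt : k < j := lt_of_le_of_ne hge (Ne.symm hne)
      exact (hspec j).1 (h ▸ hmono (k+1) j hlt (hmemN k))
  have hMinj : Function.Injective M := by
    intro j k h
    by_contra hne
    rcases Nat.lt_or_ge j k with hlt | hge
    · exact (hspec k).2.1 (h ▸ hmono (j+1) k hlt (hmemM j))
    · have hlt : k < j := lt_of_le_of_ne hge (Ne.symm hne)
      exact (hspec j).2.1 (h ▸ hmono (k+1) j hlt (hmemM k))
  have hNM : ∀ j k, N j ≠ M k := by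
    intro j k h
    rcases Nat.lt_trichotomy j k with hlt | heq | hgt
    · exact (hspec k).2.1 (h ▸ hmono (j+1) k hlt (hmemN j))
    · subst heq; exact (hspec j).2.2.1 h
    · exact (hspec j).1 (h ▸ hmono (k+1) j hgt (hmemM k))
  -- the involution
  let f : ℕ+ → ℕ+ := fun x =>
    if h : ∃ k, N k = x then M (Classical.choose h)
    else if h : ∃ k, M k = x then N (Classical.choose h)
    else x
  have hfN : ∀ k, f (N k) = M k := by
    intro k
    have h : ∃ j, N j = N k := ⟨k, rfl⟩
    simp only [f, dif_pos h]
    exact congrArg M (hNinj (Classical.choose_spec h))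
  have hfM : ∀ k, f (M k) = N k := by
    intro k
    have h1 : ¬ ∃ j, N j = M k := by rintro ⟨j, hj⟩; exact hNM j k hj
    have h2 : ∃ j, M j = M k := ⟨k, rfl⟩
    simp only [f, dif_neg h1, dif_pos h2]
    exact congrArg N (hMinj (Classical.choose_spec h2))
  have hfother : ∀ x, (¬ ∃ k, N k = x) → (¬ ∃ k, M k = x) → f x = x := by
    intro x h1 h2
    simp only [f, dif_neg h1, dif_neg h2]
  have hinv : Function.Involutive f := by
    intro x
    by_cases h1 : ∃ k, N k = x
    · obtain ⟨k, rfl⟩ := h1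
      rw [hfN, hfM]
    · by_cases h2 : ∃ k, M k = x
      · obtain ⟨k, rfl⟩ := h2
        rw [hfM, hfN]
      · rw [hfother x h1 h2, hfother x h1 h2]
  let σ : Equiv.Perm ℕ+ := hinv.toPerm f
  have hσapp : ∀ x, σ x = f x := fun _ => rfl
  have hσ2 : σ * σ = 1 := by
    ext x
    simp only [Equiv.Perm.mul_apply, Equiv.Perm.one_apply, hσapp]
    exact hinv x
  have hcyc : ∀ n, {m : ℕ+ | σ.SameCycle n m} = {n, σ n} := cycle_set_of_invol hσ2
  refine ⟨σ, ?_, ?_, ?_⟩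
  · intro n
    rw [hcyc]
    exact (Set.finite_singleton _).insert _
  · intro n
    rw [hcyc]
    exact le_trans (Set.ncard_insert_le _ _) (by simp [Set.ncard_singleton])
  · apply Set.infinite_of_injective_forall_mem (f := N) hNinj
    intro k
    have hne : N k ≠ M k := (hspec k).2.2.1
    have hset : {m : ℕ+ | σ.SameCycle (N k) m}
        = (({N k, M k} : Finset ℕ+) : Set ℕ+) := by
      rw [hcyc, hσapp, hfN]
      simp
    have hsum : cyclePrice σ p (N k) = p (N k) + p (M k) := by
      rw [cyclePrice]
      rw [hset]
      rw [Finset.tsum_subtype']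
      rw [Finset.sum_insert (by simpa using hne), Finset.sum_singleton]
    simp only [Set.mem_setOf_eq, hsum]
    exact (hspec k).2.2.2
end

section
/- Let p : ℕ⁺ → ℝ with p_n ≥ 0, ∑_{n=1}^∞ p_n = 1, and suppose there are infinitely many indices n with p_n > 0. Then there exists a partition of the positive integers into finite nonempty blocks (the cycles, revealed to the prisoners) such that for every sequence a : ℕ⁺ → ℝ with a_n ≥ 0 and ∑_{n=1}^∞ a_n ≤ 1, every block B of the partition contains some n with a_n < ∑_{i ∈ B} p_i (i.e., in Version 1.d, where the prisoners are told all members of each cycle, there is no strategy in general: in each cycle at least one prisoner fails). -/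
open scoped BigOperators

theorem stmt_16 (p : ℕ+ → ℝ) (hp : ∀ n, 0 ≤ p n) (hpsum : HasSum p 1)
    (hinf : {n : ℕ+ | 0 < p n}.Infinite) :
    ∃ P : Set (Finset ℕ+), (∀ B ∈ P, B.Nonempty) ∧
      (∀ n : ℕ+, ∃! B, B ∈ P ∧ n ∈ B) ∧
      ∀ a : ℕ+ → ℝ, (∀ n, 0 ≤ a n) → Summable a → (∑' n, a n) ≤ 1 →
        ∀ B ∈ P, ∃ n ∈ B, a n < ∑ i ∈ B, p i := by
  -- Step 1: for every n there is m > n with card * p-sum > 1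
  have key : ∀ n : ℕ+, ∃ m : ℕ+, n < m ∧
      1 < ((Finset.Ico n m).card : ℝ) * ∑ i ∈ Finset.Ico n m, p i := by
    intro n
    obtain ⟨i, hi, hni⟩ := hinf.exists_gt n
    have hε : 0 < p i := hi
    obtain ⟨k, hk⟩ := exists_nat_gt (1 / p i)
    have hk1 : 1 < (k : ℝ) * p i := by
      rw [div_lt_iff₀ hε] at hk; linarith
    refine ⟨⟨(i : ℕ) + k + 1, Nat.succ_pos _⟩, ?_, ?_⟩
    · apply (PNat.coe_lt_coe _ _).1
      have : (n : ℕ) < (i : ℕ) := hni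
      simp only [PNat.mk_coe]
      omega
    · set m : ℕ+ := ⟨(i : ℕ) + k + 1, Nat.succ_pos _⟩ with hm
      have him : i < m := by
        rw [← PNat.coe_lt_coe]; simp only [hm, PNat.mk_coe]; omega
      have hiI : i ∈ Finset.Ico n m := Finset.mem_Ico.2 ⟨hni.le, him⟩
      have hcard : k ≤ (Finset.Ico n m).card := by
        rw [PNat.card_Ico]
        have h1 : (n : ℕ) < (i : ℕ) := hni
        have h2 : (m : ℕ) = (i : ℕ) + k + 1 := rfl
        omega
      have hsum : p i ≤ ∑ j ∈ Finset.Ico n m, p j :=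
        Finset.single_le_sum (fun j _ => hp j) hiI
      calc (1:ℝ) < k * p i := hk1
        _ ≤ ((Finset.Ico n m).card : ℝ) * p i :=
            mul_le_mul_of_nonneg_right (by exact_mod_cast hcard) hε.le
        _ ≤ _ := mul_le_mul_of_nonneg_left hsum (by positivity)
  choose f hf1 hf2 using key
  set N : ℕ → ℕ+ := fun k => f^[k] 1 with hN
  have hNsucc : ∀ k, N (k+1) = f (N k) := fun k => Function.iterate_succ_apply' f k 1
  have hNlt : ∀ k, N k < N (k+1) := fun k => by rw [hNsucc]; exact hf1 _
  have hNmono : StrictMono N := strictMono_nat_of_lt_succ hNlt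
  have hN0 : N 0 = 1 := rfl
  have hNge : ∀ k, k + 1 ≤ (N k : ℕ) := by
    intro k; induction k with
    | zero => simp [hN0]
    | succ k ih =>
        have h := hNlt k
        rw [← PNat.coe_lt_coe] at h
        omega
  refine ⟨Set.range (fun k => Finset.Ico (N k) (N (k+1))), ?_, ?_, ?_⟩
  · rintro B ⟨k, rfl⟩
    exact Finset.nonempty_Ico.2 (hNlt k)
  · intro n
    have hP0 : N 0 ≤ n := hN0 ▸ n.one_le
    set k₀ := Nat.findGreatest (fun k => N k ≤ n) (n : ℕ) with hk₀
    have hle : N k₀ ≤ n := by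
      have := Nat.findGreatest_spec (P := fun k => N k ≤ n) (m := 0)
        (Nat.zero_le (n : ℕ)) hP0
      simpa [hk₀] using this
    have hlt : n < N (k₀ + 1) := by
      by_contra h
      push_neg at h
      have hb : k₀ + 1 ≤ (n : ℕ) := by
        have h1 := hNge (k₀+1)
        have h2 : (N (k₀+1) : ℕ) ≤ (n : ℕ) := h
        omega
      exact Nat.findGreatest_is_greatest (P := fun k => N k ≤ n)
        (by rw [← hk₀]; exact Nat.lt_succ_self k₀) hb h
    refine ⟨Finset.Ico (N k₀) (N (k₀+1)), ⟨⟨k₀, rfl⟩, Finset.mem_Ico.2 ⟨hle, hlt⟩⟩, ?_⟩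
    rintro B ⟨⟨j, rfl⟩, hnB⟩
    rw [Finset.mem_Ico] at hnB
    rcases lt_trichotomy j k₀ with hj | hj | hj
    · exact absurd hle (not_le.2 (lt_of_lt_of_le hnB.2 (hNmono.monotone (Nat.succ_le_of_lt hj))))
    · rw [hj]
    · exact absurd hnB.1 (not_le.2 (lt_of_lt_of_le hlt (hNmono.monotone (Nat.succ_le_of_lt hj))))
  · intro a ha hsa hta B hB
    obtain ⟨k, rfl⟩ := hB
    by_contra h
    push_neg at h
    set B := Finset.Ico (N k) (N (k+1)) with hB
    have h1 : (B.card : ℝ) * ∑ i ∈ B, p i ≤ ∑ n ∈ B, a n := by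
      have := Finset.card_nsmul_le_sum B a (∑ i ∈ B, p i) (fun i hi => h i hi)
      rwa [nsmul_eq_mul] at this
    have h2 : ∑ n ∈ B, a n ≤ ∑' n, a n := Summable.sum_le_tsum B (fun i _ => ha i) hsa
    have h3 : 1 < (B.card : ℝ) * ∑ i ∈ B, p i := by
      have := hf2 (N k)
      rwa [← hNsucc] at this
    linarith
end

section
/- Let p : ℕ⁺ → ℝ with p_n ≥ 0 and ∑_{n=1}^∞ p_n = 1, and let k be a positive integer. Then for every partition of the positive integers into finite nonempty blocks each of cardinality at most k, there exists a sequence a : ℕ⁺ → ℝ with a_n ≥ 0 and ∑_{n=1}^∞ a_n ≤ 1 such that for all but finitely many n, a_n ≥ ∑_{i ∈ B(n)} p_i, where B(n) is the block containing n (i.e., in Version 1.d with cycle lengths bounded by a known k, there is a strategy). -/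
open scoped BigOperators

theorem stmt_17 (p : ℕ+ → ℝ) (hp : ∀ n, 0 ≤ p n) (hpsum : HasSum p 1)
    (k : ℕ+) (P : Set (Finset ℕ+))
    (hne : ∀ B ∈ P, B.Nonempty) (hcard : ∀ B ∈ P, B.card ≤ k)
    (hpart : ∀ n : ℕ+, ∃! B, B ∈ P ∧ n ∈ B) :
    ∃ a : ℕ+ → ℝ, (∀ n, 0 ≤ a n) ∧ Summable a ∧ (∑' n, a n) ≤ 1 ∧
      {n : ℕ+ | ∃ B ∈ P, n ∈ B ∧ a n < ∑ i ∈ B, p i}.Finite := by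
  classical
  -- the block containing n
  set Bl : ℕ+ → Finset ℕ+ := fun n => (hpart n).choose with hBldef
  have hBl : ∀ n, Bl n ∈ P ∧ n ∈ Bl n := fun n => (hpart n).choose_spec.1
  have hBluniq : ∀ n, ∀ B ∈ P, n ∈ B → B = Bl n := fun n B hB hn =>
    (hpart n).choose_spec.2 B ⟨hB, hn⟩
  have hBlBl : ∀ n i, i ∈ Bl n → Bl i = Bl n := fun n i hi =>
    (hBluniq i (Bl n) (hBl n).1 hi).symm
  have hkpos : (0 : ℝ) < (k : ℝ) := by exact_mod_cast k.pos
  -- choose finite F with sum close to 1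
  have h1 : (1 : ℝ) - (k : ℝ)⁻¹ < 1 := by
    have : (0 : ℝ) < (k : ℝ)⁻¹ := inv_pos.mpr hkpos
    linarith
  obtain ⟨F, hF⟩ : ∃ F : Finset ℕ+, 1 - (k : ℝ)⁻¹ < ∑ i ∈ F, p i := by
    have := hpsum.eventually (eventually_gt_nhds h1)
    exact this.exists
  set T : Finset ℕ+ := F.biUnion Bl with hTdef
  have hFT : ∀ i ∈ T, ∀ j ∈ Bl i, j ∈ T := by
    intro i hi j hj
    rcases Finset.mem_biUnion.mp hi with ⟨m, hm, him⟩
    have : Bl i = Bl m := hBlBl m i him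
    exact Finset.mem_biUnion.mpr ⟨m, hm, this ▸ hj⟩
  have hTsum : 1 - (k : ℝ)⁻¹ < ∑ i ∈ T, p i := by
    refine lt_of_lt_of_le hF (Finset.sum_le_sum_of_subset_of_nonneg ?_ (fun i _ _ => hp i))
    intro i hi
    exact Finset.mem_biUnion.mpr ⟨i, hi, (hBl i).2⟩
  -- the amounts
  set a : ℕ+ → ℝ := fun n => if n ∈ T then 0 else ∑ i ∈ Bl n, p i with hadef
  have ha0 : ∀ n, 0 ≤ a n := by
    intro n
    by_cases h : n ∈ T <;> simp [hadef, h, Finset.sum_nonneg fun i _ => hp i]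
  -- blocks of elements outside T avoid T
  have houtside : ∀ n, n ∉ T → ∀ i ∈ Bl n, i ∉ T := by
    intro n hn i hi hiT
    have h1 : Bl i = Bl n := hBlBl n i hi
    have : n ∈ T := hFT i hiT n (h1 ▸ (hBl n).2)
    exact hn this
  -- key bound on partial sums
  have hkey : ∀ G : Finset ℕ+, ∑ n ∈ G, a n ≤ 1 := by
    intro G
    set G' : Finset ℕ+ := G \ T with hG'def
    have hGa : ∑ n ∈ G, a n = ∑ n ∈ G', ∑ i ∈ Bl n, p i := by
      have e0 : ∑ n ∈ G, a n = ∑ n ∈ G', a n := by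
        refine (Finset.sum_subset (Finset.sdiff_subset) ?_).symm
        intro x hx hx'
        have : x ∈ T := by
          by_contra h
          exact hx' (Finset.mem_sdiff.mpr ⟨hx, h⟩)
        simp [hadef, this]
      rw [e0]
      refine Finset.sum_congr rfl ?_
      intro n hn
      have : n ∉ T := (Finset.mem_sdiff.mp hn).2
      simp [hadef, this]
    set U : Finset ℕ+ := G'.biUnion Bl with hUdef
    have hBU : ∀ n ∈ G', Bl n ⊆ U := by
      intro n hn i hi
      exact Finset.mem_biUnion.mpr ⟨n, hn, hi⟩
    have hswap : ∑ n ∈ G', ∑ i ∈ Bl n, p i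
        = ∑ i ∈ U, ∑ n ∈ G', (if i ∈ Bl n then p i else 0) := by
      rw [Finset.sum_comm]
      refine Finset.sum_congr rfl ?_
      intro n hn
      rw [← Finset.sum_filter]
      have : U.filter (· ∈ Bl n) = Bl n := by
        ext x
        simp only [Finset.mem_filter]
        exact ⟨fun h => h.2, fun h => ⟨hBU n hn h, h⟩⟩
      rw [this]
    have hinner : ∀ i ∈ U, ∑ n ∈ G', (if i ∈ Bl n then p i else 0) ≤ (k : ℝ) * p i := by
      intro i hiU
      rw [← Finset.sum_filter, Finset.sum_const, nsmul_eq_mul]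
      have hsub : G'.filter (fun n => i ∈ Bl n) ⊆ Bl i := by
        intro n hn
        have hi : i ∈ Bl n := (Finset.mem_filter.mp hn).2
        have : Bl i = Bl n := hBlBl n i hi
        exact this ▸ (hBl n).2
      have hc : ((G'.filter (fun n => i ∈ Bl n)).card : ℝ) ≤ (k : ℝ) := by
        have := le_trans (Finset.card_le_card hsub) (hcard (Bl i) (hBl i).1)
        exact_mod_cast this
      exact mul_le_mul_of_nonneg_right hc (hp i)
    have hUT : Disjoint T U := by
      rw [Finset.disjoint_right]
      intro i hiU hiT
      rcases Finset.mem_biUnion.mp hiU with ⟨n, hn, hin⟩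
      exact houtside n (Finset.mem_sdiff.mp hn).2 i hin hiT
    have hTU1 : ∑ i ∈ T ∪ U, p i ≤ 1 :=
      sum_le_hasSum _ (fun i _ => hp i) hpsum
    have hU : ∑ i ∈ U, p i ≤ (k : ℝ)⁻¹ := by
      rw [Finset.sum_union hUT] at hTU1
      linarith
    calc ∑ n ∈ G, a n = ∑ n ∈ G', ∑ i ∈ Bl n, p i := hGa
      _ = ∑ i ∈ U, ∑ n ∈ G', (if i ∈ Bl n then p i else 0) := hswap
      _ ≤ ∑ i ∈ U, (k : ℝ) * p i := Finset.sum_le_sum hinner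
      _ = (k : ℝ) * ∑ i ∈ U, p i := by rw [Finset.mul_sum]
      _ ≤ (k : ℝ) * (k : ℝ)⁻¹ := mul_le_mul_of_nonneg_left hU hkpos.le
      _ = 1 := mul_inv_cancel₀ hkpos.ne'
  have hsummable : Summable a := summable_of_sum_le ha0 hkey
  refine ⟨a, ha0, hsummable, ?_, ?_⟩
  · exact le_of_tendsto' hsummable.hasSum fun G => hkey G
  · refine Set.Finite.subset T.finite_toSet ?_
    intro n hn
    rcases hn with ⟨B, hB, hnB, hlt⟩
    have hBeq : B = Bl n := hBluniq n B hB hnB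
    by_contra hnT
    have hnT' : n ∉ T := by simpa using hnT
    have : a n = ∑ i ∈ Bl n, p i := by simp [hadef, hnT']
    rw [hBeq] at hlt
    rw [this] at hlt
    exact lt_irrefl _ hlt
end

section
/- For every sequence a : ℕ⁺ → ℝ there exists a finite-cycle-permutation σ of the positive integers such that the set {n : a_n < ∑_{i ∈ orbit_σ(n)} 1/i} is infinite (i.e., in Version 2.b, where the box prices are p_n = 1/n and release requires all but finitely many prisoners to find their labels, there is no strategy: for any amount distribution, infinitely many prisoners cannot afford to open all boxes of their cycle). -/
open scoped BigOperators ENNReal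

namespace Stmt19Aux

variable (b : ℕ → ℕ) (h1 : b 0 = 1) (hm : ∀ k, b k < b (k + 1))

include h1 hm

lemma blb : ∀ k, k + 1 ≤ b k := by
  intro k
  induction k with
  | zero => omega
  | succ k ih => have := hm k; omega

lemma bpos (k : ℕ) : 0 < b k := by have := blb b h1 hm k; omega

lemma bmono : StrictMono b := strictMono_nat_of_lt_succ hm

lemma existsK (n : ℕ+) : ∃ k, (n : ℕ) < b (k + 1) := by
  refine ⟨(n : ℕ), ?_⟩
  have := blb b h1 hm ((n : ℕ) + 1)
  omega

/-- the block index of `n` -/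
noncomputable def Kb (n : ℕ+) : ℕ := Nat.find (existsK b h1 hm n)

lemma Kb_lt (n : ℕ+) : (n : ℕ) < b (Kb b h1 hm n + 1) := Nat.find_spec (existsK b h1 hm n)

lemma Kb_le (n : ℕ+) : b (Kb b h1 hm n) ≤ (n : ℕ) := by
  rcases h : Kb b h1 hm n with _ | k
  · rw [h1]; exact n.pos
  · have hlt : k < Kb b h1 hm n := by omega
    have h2 := Nat.find_min (existsK b h1 hm n) hlt
    omega

lemma Kb_eq {n : ℕ+} {k : ℕ} (hl : b k ≤ (n : ℕ)) (hr : (n : ℕ) < b (k + 1)) :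
    Kb b h1 hm n = k := by
  refine le_antisymm (Nat.find_min' _ hr) ?_
  by_contra h
  push_neg at h
  have h2 : Kb b h1 hm n + 1 ≤ k := h
  have h3 := (bmono b h1 hm).monotone h2
  have h4 := Kb_lt b h1 hm n
  omega

/-- forward map: rotate each block `[b k, b (k+1))` -/
noncomputable def fb (n : ℕ+) : ℕ+ :=
  if (n : ℕ) + 1 < b (Kb b h1 hm n + 1) then n + 1 else Nat.toPNat (b (Kb b h1 hm n)) (bpos b h1 hm _)

lemma Kb_fb (n : ℕ+) : Kb b h1 hm (fb b h1 hm n) = Kb b h1 hm n := by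
  unfold fb
  split_ifs with h
  · exact Kb_eq b h1 hm (by have := Kb_le b h1 hm n; simp; omega) (by simpa using h)
  · exact Kb_eq b h1 hm (le_refl _) (hm _)

lemma fb_inj : Function.Injective (fb b h1 hm) := by
  intro n m hnm
  have hk : Kb b h1 hm n = Kb b h1 hm m := by
    rw [← Kb_fb b h1 hm n, ← Kb_fb b h1 hm m, hnm]
  have hln := Kb_le b h1 hm n
  have hlm := Kb_le b h1 hm m
  have hrn := Kb_lt b h1 hm n
  have hrm := Kb_lt b h1 hm m
  unfold fb at hnm
  split_ifs at hnm with h h' h'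
  · have hc := congrArg PNat.val hnm
    simp only [PNat.add_coe, PNat.one_coe] at hc
    exact PNat.coe_injective (by omega)
  · exfalso
    have hc := congrArg PNat.val hnm
    simp only [PNat.add_coe, PNat.one_coe, Nat.toPNat, PNat.mk_coe] at hc
    rw [← hk] at hc
    omega
  · exfalso
    have hc := congrArg PNat.val hnm
    simp only [PNat.add_coe, PNat.one_coe, Nat.toPNat, PNat.mk_coe] at hc
    rw [hk] at hc
    omega
  · rw [hk] at h hrn
    apply PNat.coe_injective
    omega

lemma fb_surj : Function.Surjective (fb b h1 hm) := by
  intro m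
  have hlm := Kb_le b h1 hm m
  have hrm := Kb_lt b h1 hm m
  by_cases h : b (Kb b h1 hm m) < (m : ℕ)
  · have hpos : 0 < (m : ℕ) - 1 := by have := bpos b h1 hm (Kb b h1 hm m); omega
    refine ⟨⟨(m : ℕ) - 1, hpos⟩, ?_⟩
    have hK : Kb b h1 hm ⟨(m : ℕ) - 1, hpos⟩ = Kb b h1 hm m := by
      apply Kb_eq b h1 hm
      · show b (Kb b h1 hm m) ≤ (m : ℕ) - 1
        omega
      · show (m : ℕ) - 1 < b (Kb b h1 hm m + 1)
        omega
    unfold fb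
    split_ifs with hcond
    · apply PNat.coe_injective
      show (m : ℕ) - 1 + 1 = (m : ℕ)
      omega
    · exfalso
      rw [hK] at hcond
      simp only [PNat.mk_coe] at hcond
      omega
  · have hpos : 0 < b (Kb b h1 hm m + 1) - 1 := by
      have ha := bpos b h1 hm (Kb b h1 hm m)
      have hb := hm (Kb b h1 hm m)
      omega
    refine ⟨⟨b (Kb b h1 hm m + 1) - 1, hpos⟩, ?_⟩
    have hstep := hm (Kb b h1 hm m)
    have hK : Kb b h1 hm ⟨b (Kb b h1 hm m + 1) - 1, hpos⟩ = Kb b h1 hm m := by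
      apply Kb_eq b h1 hm
      · show b (Kb b h1 hm m) ≤ b (Kb b h1 hm m + 1) - 1
        omega
      · show b (Kb b h1 hm m + 1) - 1 < b (Kb b h1 hm m + 1)
        omega
    unfold fb
    split_ifs with hcond
    · exfalso
      rw [hK] at hcond
      simp only [PNat.mk_coe] at hcond
      omega
    · apply PNat.coe_injective
      show b (Kb b h1 hm ⟨b (Kb b h1 hm m + 1) - 1, hpos⟩) = (m : ℕ)
      rw [hK]
      omega

/-- the permutation -/
noncomputable def sigma : Equiv.Perm ℕ+ :=
  Equiv.ofBijective (fb b h1 hm) ⟨fb_inj b h1 hm, fb_surj b h1 hm⟩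

lemma sigma_apply (n : ℕ+) : sigma b h1 hm n = fb b h1 hm n := rfl

lemma Kb_sigma (n : ℕ+) : Kb b h1 hm (sigma b h1 hm n) = Kb b h1 hm n := Kb_fb b h1 hm n

lemma Kb_zpow (i : ℤ) : ∀ n : ℕ+, Kb b h1 hm ((sigma b h1 hm ^ i) n) = Kb b h1 hm n := by
  induction i using Int.induction_on with
  | zero => intro n; simp
  | succ i ih =>
      intro n
      have hs : ((sigma b h1 hm) ^ ((i : ℤ) + 1)) n = ((sigma b h1 hm) ^ (i : ℤ)) (sigma b h1 hm n) := by
        rw [zpow_add, zpow_one, Equiv.Perm.mul_apply]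
      rw [hs, ih, Kb_sigma]
  | pred i ih =>
      intro n
      have hs : ((sigma b h1 hm) ^ (-(i : ℤ) - 1)) n = ((sigma b h1 hm) ^ (-(i : ℤ))) ((sigma b h1 hm)⁻¹ n) := by
        rw [sub_eq_add_neg, zpow_add, zpow_neg_one, Equiv.Perm.mul_apply]
      rw [hs, ih]
      have h5 := Kb_sigma b h1 hm ((sigma b h1 hm)⁻¹ n)
      rw [Equiv.Perm.inv_def, Equiv.apply_symm_apply] at h5
      exact h5.symm

lemma Kb_sameCycle {n m : ℕ+} (h : (sigma b h1 hm).SameCycle n m) :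
    Kb b h1 hm m = Kb b h1 hm n := by
  obtain ⟨i, hi⟩ := h
  rw [← hi, Kb_zpow]

lemma sigma_pow (k : ℕ) : ∀ j : ℕ, b k + j < b (k + 1) →
    ((((sigma b h1 hm) ^ j) (⟨b k, bpos b h1 hm k⟩ : ℕ+) : ℕ+) : ℕ) = b k + j := by
  intro j
  induction j with
  | zero => intro _; rfl
  | succ j ih =>
      intro hj
      have hj' : b k + j < b (k + 1) := by omega
      have ihv := ih hj'
      set y := ((sigma b h1 hm) ^ j) (⟨b k, bpos b h1 hm k⟩ : ℕ+) with hy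
      have hKy : Kb b h1 hm y = k := Kb_eq b h1 hm (by omega) (by omega)
      have : ((sigma b h1 hm) ^ (j + 1)) (⟨b k, bpos b h1 hm k⟩ : ℕ+) = sigma b h1 hm y := by
        rw [pow_succ']; rfl
      rw [this, sigma_apply]
      unfold fb
      split_ifs with hcond
      · simp only [PNat.add_coe, PNat.one_coe]
        omega
      · exfalso
        rw [hKy] at hcond
        omega

lemma mem_orbit_of_block {k : ℕ} {m : ℕ+} (hl : b k ≤ (m : ℕ)) (hr : (m : ℕ) < b (k + 1)) :
    (sigma b h1 hm).SameCycle (⟨b k, bpos b h1 hm k⟩ : ℕ+) m := by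
  refine ⟨((m : ℕ) - b k : ℕ), ?_⟩
  rw [zpow_natCast]
  apply PNat.coe_injective
  rw [sigma_pow b h1 hm k ((m : ℕ) - b k) (by omega)]
  omega

lemma orbit_eq (n : ℕ+) :
    {m : ℕ+ | (sigma b h1 hm).SameCycle n m} =
      {m : ℕ+ | b (Kb b h1 hm n) ≤ (m : ℕ) ∧ (m : ℕ) < b (Kb b h1 hm n + 1)} := by
  ext m
  simp only [Set.mem_setOf_eq]
  constructor
  · intro h
    have := Kb_sameCycle b h1 hm h
    have h1' := Kb_le b h1 hm m
    have h2' := Kb_lt b h1 hm m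
    rw [this] at h1' h2'
    exact ⟨h1', h2'⟩
  · rintro ⟨hl, hr⟩
    have hn := mem_orbit_of_block b h1 hm (Kb_le b h1 hm n) (Kb_lt b h1 hm n)
    have hmm := mem_orbit_of_block b h1 hm hl hr
    exact hn.symm.trans hmm

lemma block_finite (k : ℕ) :
    {m : ℕ+ | b k ≤ (m : ℕ) ∧ (m : ℕ) < b (k + 1)}.Finite := by
  have : {m : ℕ+ | b k ≤ (m : ℕ) ∧ (m : ℕ) < b (k + 1)} =
      ((↑) : ℕ+ → ℕ) ⁻¹' (Set.Ico (b k) (b (k + 1))) := by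
    ext m; simp [Set.mem_Ico]
  rw [this]
  exact (Set.finite_Ico _ _).preimage (PNat.coe_injective.injOn)

lemma block_tsum (M N : ℕ) (hM : 0 < M) :
    ∑' m : {m : ℕ+ | M ≤ (m : ℕ) ∧ (m : ℕ) < N}, (1 / ((m : ℕ+) : ℝ)) =
      ∑ i ∈ Finset.Ico M N, (1 / (i : ℝ)) := by
  let e : {m : ℕ+ | M ≤ (m : ℕ) ∧ (m : ℕ) < N} ≃ {i // i ∈ Finset.Ico M N} :=
    { toFun := fun m => ⟨((m : ℕ+) : ℕ), by
        have hmem := m.2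
        simp only [Set.mem_setOf_eq] at hmem
        simp only [Finset.mem_Ico]
        exact hmem⟩
      invFun := fun i => ⟨⟨(i : ℕ), by
        have hmem := i.2
        simp only [Finset.mem_Ico] at hmem
        omega⟩, by
        have hmem := i.2
        simp only [Finset.mem_Ico] at hmem
        show M ≤ (i : ℕ) ∧ (i : ℕ) < N
        exact hmem⟩
      left_inv := fun m => by
        apply Subtype.ext
        apply PNat.coe_injective
        rfl
      right_inv := fun i => rfl }
  have h2 := Equiv.tsum_eq e (fun i : {i // i ∈ Finset.Ico M N} => (1 / ((i : ℕ) : ℝ)))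
  have h4 : ∑' i : {i // i ∈ Finset.Ico M N}, (1 / ((i : ℕ) : ℝ)) =
      ∑ i ∈ Finset.Ico M N, (1 / (i : ℝ)) := by
    rw [tsum_fintype, Finset.univ_eq_attach]
    exact Finset.sum_attach (Finset.Ico M N) (fun i => 1 / (i : ℝ))
  exact h2.trans h4

end Stmt19Aux

theorem stmt_19 :
    ∀ a : ℕ+ → ℝ, ∃ σ : Equiv.Perm ℕ+, FiniteCycles σ ∧
      {n : ℕ+ | a n < cyclePrice σ (fun i : ℕ+ => 1 / (i : ℝ)) n}.Infinite := by
  intro a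
  -- divergence of the harmonic series
  have hdiv : Filter.Tendsto (fun n => ∑ i ∈ Finset.range n, (1 / (i : ℝ)))
    Filter.atTop Filter.atTop := by
    rw [← not_summable_iff_tendsto_nat_atTop_of_nonneg (fun n => by positivity)]
    exact Real.not_summable_one_div_natCast
  have key : ∀ m : ℕ+, ∃ N : ℕ, (m : ℕ) < N ∧
    a m < ∑ i ∈ Finset.Ico (m : ℕ) N, (1 / (i : ℝ)) := by
    intro m
    have h1 := (hdiv.eventually_gt_atTop (a m + ∑ i ∈ Finset.range (m : ℕ), (1 / (i : ℝ))))
    have h2 := Filter.eventually_gt_atTop (m : ℕ)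
    obtain ⟨N, hN1, hN2⟩ := (h1.and h2).exists
    refine ⟨N, hN2, ?_⟩
    rw [Finset.sum_Ico_eq_sub _ (le_of_lt hN2)]
    linarith
  choose F hF1 hF2 using key
  -- the block boundaries
  let G : ℕ+ → ℕ+ := fun m => ⟨F m, lt_trans m.pos (hF1 m)⟩
  let bp : ℕ → ℕ+ := fun k => G^[k] 1
  let b : ℕ → ℕ := fun k => (bp k : ℕ)
  have hbp : ∀ k, bp (k + 1) = G (bp k) := fun k => Function.iterate_succ_apply' G k 1
  have h1 : b 0 = 1 := rfl
  have hm : ∀ k, b k < b (k + 1) := by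
    intro k
    show (bp k : ℕ) < (bp (k + 1) : ℕ)
    rw [hbp]
    exact hF1 (bp k)
  refine ⟨Stmt19Aux.sigma b h1 hm, ?_, ?_⟩
  · intro n
    rw [Stmt19Aux.orbit_eq]
    exact Stmt19Aux.block_finite b h1 hm _
  · have hsm : StrictMono bp := strictMono_nat_of_lt_succ (fun k => by
    have hc := hm k
    exact_mod_cast hc)
    refine Set.infinite_of_injective_forall_mem (f := bp) hsm.injective ?_
    intro k
    simp only [Set.mem_setOf_eq]
    have hK : Stmt19Aux.Kb b h1 hm (bp k) = k :=
      Stmt19Aux.Kb_eq b h1 hm (le_refl _) (hm k)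
    -- compute the cycle price
    have hbk : (⟨b k, Stmt19Aux.bpos b h1 hm k⟩ : ℕ+) = bp k := rfl
    have horb := Stmt19Aux.orbit_eq b h1 hm (bp k)
    rw [hK] at horb
    have hprice : cyclePrice (Stmt19Aux.sigma b h1 hm) (fun i : ℕ+ => 1 / (i : ℝ)) (bp k) =
        ∑ i ∈ Finset.Ico (b k) (b (k + 1)), (1 / (i : ℝ)) := by
      unfold cyclePrice
      rw [← Stmt19Aux.block_tsum b h1 hm (b k) (b (k + 1)) (Stmt19Aux.bpos b h1 hm k)]
      exact tsum_congr_set_coe (fun i : ℕ+ => 1 / (i : ℝ)) horb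
    rw [hprice]
    have := hF2 (bp k)
    have hb1 : b (k + 1) = F (bp k) := by
      show (bp (k + 1) : ℕ) = F (bp k)
      rw [hbp]
      rfl
    rw [hb1]
    exact this
end
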